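/- Let e_n(p) satisfy e_0 = 0, e_1 = 1, and for n ≥ 2 the recurrence e_n = p(e_{n-1} + 1) + (1-p) ∑_{k=2}^{n} q_k (e_{n-k} + k - 1), where q_k = p(1-p)^{k-2} for 2 ≤ k ≤ n-1 and q_n = (1-p)^{n-2}. Then for 1/2 ≤ p < 1 and n ≥ 3, e_n(p) = (1 - p + p^2) n + 3p - 1 - 2p^2. -/

import Mathlib

/-- Let `e n = E(X_n)` for the asymmetric shelf shuffle with parameter `p` satisfy
`e 0 = 0`, `e 1 = 1` and, for `n ≥ 2`,
`e n = p(e (n-1) + 1) + (1-p) ∑_{k=2}^{n} q k (e (n-k) + k - 1)` where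
`q k = p(1-p)^(k-2)` for `2 ≤ k ≤ n-1` and `q n = (1-p)^(n-2)`. Then for
`1/2 ≤ p < 1` and `n ≥ 3`, `e n = (1-p+p²)n + 3p - 1 - 2p²`. -/
theorem asymmetric_shelf_expectation (p : ℝ) (hp : 1 / 2 ≤ p) (hp1 : p < 1)
    (e : ℕ → ℝ) (h0 : e 0 = 0) (h1 : e 1 = 1)
    (hrec : ∀ n, 2 ≤ n → e n =
      p * (e (n - 1) + 1)
      + (1 - p) * ∑ k ∈ Finset.Icc 2 n,
          (if k = n then (1 - p) ^ (n - 2) else p * (1 - p) ^ (k - 2))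
            * (e (n - k) + (k : ℝ) - 1)) :
    ∀ n, 3 ≤ n → e n = (1 - p + p ^ 2) * n + 3 * p - 1 - 2 * p ^ 2 := by
  -- geometric sum
  have hgeo : ∀ t : ℕ, ∑ i ∈ Finset.range t, p * (1 - p) ^ (i + 1)
      = (1 - p) - (1 - p) ^ (t + 1) := by
    intro t
    induction t with
    | zero => simp
    | succ t ih =>
      rw [Finset.sum_range_succ, ih]
      ring
  -- sum of the shifted coefficients
  have hsum : ∀ t : ℕ, ∑ i ∈ Finset.range (t + 1),
      (if i = t then (1 - p) ^ (t + 1) else p * (1 - p) ^ (i + 1)) = 1 - p := by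
    intro t
    rw [Finset.sum_range_succ, if_pos rfl]
    have : ∀ i ∈ Finset.range t,
        (if i = t then (1 - p) ^ (t + 1) else p * (1 - p) ^ (i + 1))
          = p * (1 - p) ^ (i + 1) := by
      intro i hi
      rw [if_neg (by simp at hi; omega)]
    rw [Finset.sum_congr rfl this, hgeo]
    ring
  -- rewrite the recurrence sums over `range`
  have hT : ∀ n : ℕ, 2 ≤ n →
      ∑ k ∈ Finset.Icc 2 n,
          (if k = n then (1 - p) ^ (n - 2) else p * (1 - p) ^ (k - 2))
            * (e (n - k) + (k : ℝ) - 1)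
        = ∑ i ∈ Finset.range (n - 1),
          (if 2 + i = n then (1 - p) ^ (n - 2) else p * (1 - p) ^ i)
            * (e (n - (2 + i)) + ((2 + i : ℕ) : ℝ) - 1) := by
    intro n hn
    rw [← Finset.Ico_add_one_right_eq_Icc, Finset.sum_Ico_eq_sum_range]
    apply Finset.sum_congr (by rw [show n + 1 - 2 = n - 1 from by omega])
    intro i _
    have h2 : 2 + i - 2 = i := by omega
    rw [h2]
  -- the key step: e (m+1) = e m + (1 - p + p^2) for m ≥ 2
  have hstep : ∀ m : ℕ, 2 ≤ m → e (m + 1) = e m + (1 - p + p ^ 2) := by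
    intro m hm
    have hrm := hrec m hm
    have hrm1 := hrec (m + 1) (by omega)
    rw [hT m hm] at hrm
    rw [hT (m + 1) (by omega)] at hrm1
    -- simplify the range sum for m+1
    have hsize : m + 1 - 1 = (m - 1) + 1 := by omega
    rw [hsize, Finset.sum_range_succ'] at hrm1
    -- the i = 0 term
    have hzero : (if 2 + 0 = m + 1 then (1 - p) ^ (m + 1 - 2)
          else p * (1 - p) ^ 0) * (e (m + 1 - (2 + 0)) + ((2 + 0 : ℕ) : ℝ) - 1)
        = p * (e (m - 1) + 1) := by
      rw [if_neg (by omega)]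
      have : m + 1 - (2 + 0) = m - 1 := by omega
      rw [this]
      push_cast
      ring
    rw [hzero] at hrm1
    -- the shifted terms
    have hterm : ∀ i ∈ Finset.range (m - 1),
        (if 2 + (i + 1) = m + 1 then (1 - p) ^ (m + 1 - 2)
            else p * (1 - p) ^ (i + 1))
          * (e (m + 1 - (2 + (i + 1))) + ((2 + (i + 1) : ℕ) : ℝ) - 1)
        = (1 - p) * ((if 2 + i = m then (1 - p) ^ (m - 2) else p * (1 - p) ^ i)
            * (e (m - (2 + i)) + ((2 + i : ℕ) : ℝ) - 1))
          + (if i = m - 2 then (1 - p) ^ (m - 1) else p * (1 - p) ^ (i + 1)) := by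
      intro i hi
      simp only [Finset.mem_range] at hi
      have hidx : m + 1 - (2 + (i + 1)) = m - (2 + i) := by omega
      rw [hidx]
      by_cases h : 2 + i = m
      · rw [if_pos (by omega), if_pos (by omega), if_pos (by omega)]
        have h1 : m + 1 - 2 = (m - 2) + 1 := by omega
        have h2 : m - 1 = (m - 2) + 1 := by omega
        rw [h1, h2]
        push_cast
        ring
      · rw [if_neg (by omega), if_neg (by omega), if_neg (by omega)]
        push_cast
        ring
    rw [Finset.sum_congr rfl hterm, Finset.sum_add_distrib, ← Finset.mul_sum] at hrm1
    -- evaluate the coefficient sum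
    have hm1 : m - 1 = (m - 2) + 1 := by omega
    have hcoef : ∑ i ∈ Finset.range (m - 1),
        (if i = m - 2 then (1 - p) ^ (m - 1) else p * (1 - p) ^ (i + 1)) = 1 - p := by
      have h := hsum (m - 2)
      rwa [← hm1] at h
    rw [hcoef] at hrm1
    have hmm : m - 1 + 1 = m := by omega
    rw [hmm] at hrm1
    linear_combination hrm1 - (1 - p) * hrm
  -- compute e 2
  have he2 : e 2 = 1 + p := by
    have h := hrec 2 (le_refl 2)
    rw [Finset.Icc_self, Finset.sum_singleton] at h
    norm_num [h1, h0] at h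
    linarith
  -- compute e 3
  have he3 : e 3 = 2 + p ^ 2 := by
    have h := hstep 2 (le_refl 2)
    rw [he2] at h
    norm_num at h
    linarith
  -- final induction
  intro n hn
  induction n, hn using Nat.le_induction with
  | base =>
    rw [he3]
    push_cast
    ring
  | succ n hn ih =>
    rw [hstep n (by omega), ih]
    push_cast
    ring
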